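/- arXiv:2109.04365 — 2 statements merged into one kernel-verified Lean document; each statement's English description precedes it below -/
import Mathlib

section
/- Let A ∈ ℂ^{m×d} have full column rank and let x ∈ ℂ^d be nonzero. Define V_x as the set of λ ∈ ℝ^{|N(Ax)|} (indexed by the support N(Ax) of Ax) for which the linear system Ay = D·λ has a solution y ∈ ℂ^d, where D is the m×|N(Ax)| matrix whose columns are the columns of dg(sign(Ax)) indexed by N(Ax). Then V_x is a real linear subspace containing the vector (|Ax|)restricted to N(Ax), and x ∈ W_A if and only if dim_ℝ V_x = 1. -/
attribute [local instance] Classical.propDecidable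

noncomputable def csign (z : ℂ) : ℂ := if z = 0 then 0 else z / (‖z‖ : ℂ)

def Wset {m d : ℕ} (B : Matrix (Fin m) (Fin d) ℂ) : Set (Fin d → ℂ) :=
  {x | ∀ y : Fin d → ℂ,
    (∀ j, csign (B.mulVec y j) = csign (B.mulVec x j)) →
      ∃ t : ℝ, 0 < t ∧ x = fun k => (t : ℂ) * y k}

/-- `V_x`: the set of real vectors `λ`, indexed by the support of `Ax`, such that
`A y = dg(sign(Ax))_{N(Ax)} · λ` has a solution `y`. -/
def Vset {m d : ℕ} (A : Matrix (Fin m) (Fin d) ℂ) (x : Fin d → ℂ) :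
    Set ({j : Fin m // A.mulVec x j ≠ 0} → ℝ) :=
  {lam | ∃ y : Fin d → ℂ, ∀ j : Fin m,
    A.mulVec y j =
      if h : A.mulVec x j ≠ 0 then csign (A.mulVec x j) * (lam ⟨j, h⟩ : ℂ) else 0}

lemma csign_eq_zero_iff {z : ℂ} : csign z = 0 ↔ z = 0 := by
  unfold csign
  split_ifs with h
  · simp [h]
  · simp [h, div_eq_zero_iff, norm_eq_zero]

lemma csign_mul_abs (z : ℂ) : csign z * (‖z‖ : ℂ) = z := by
  unfold csign
  split_ifs with h
  · simp [h]
  · have hne : ((‖z‖ : ℝ) : ℂ) ≠ 0 := by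
      exact_mod_cast norm_ne_zero_iff.mpr h
    rw [div_mul_cancel₀ _ hne]

lemma csign_real_mul {r : ℝ} (hr : 0 < r) (z : ℂ) : csign ((r : ℂ) * z) = csign z := by
  unfold csign
  have hr0 : (r : ℂ) ≠ 0 := by exact_mod_cast hr.ne'
  by_cases h : z = 0
  · simp [h]
  · have h1 : (r : ℂ) * z ≠ 0 := mul_ne_zero hr0 h
    rw [if_neg h1, if_neg h, norm_mul]
    have habs : ‖(r : ℂ)‖ = r := by
      rw [Complex.norm_real, Real.norm_eq_abs, abs_of_pos hr]
    rw [habs]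
    push_cast
    rw [mul_div_mul_left _ _ hr0]

lemma abs_csign {z : ℂ} (h : z ≠ 0) : ‖csign z‖ = 1 := by
  unfold csign
  rw [if_neg h, norm_div, Complex.norm_real, norm_norm,
    div_self (norm_ne_zero_iff.mpr h)]

lemma csign_csign (z : ℂ) : csign (csign z) = csign z := by
  by_cases h : z = 0
  · simp [csign, h]
  · have h1 : csign z ≠ 0 := fun hc => h (csign_eq_zero_iff.mp hc)
    conv_lhs => rw [csign]
    rw [if_neg h1, abs_csign h]
    simp

theorem stmt_5 (m d : ℕ) (A : Matrix (Fin m) (Fin d) ℂ) (hA : A.rank = d)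
    (x : Fin d → ℂ) (hx : x ≠ 0) :
    (∃ S : Submodule ℝ ({j : Fin m // A.mulVec x j ≠ 0} → ℝ),
        (S : Set ({j : Fin m // A.mulVec x j ≠ 0} → ℝ)) = Vset A x ∧
        (fun k : {j : Fin m // A.mulVec x j ≠ 0} => (‖A.mulVec x k.1‖ : ℝ)) ∈ S ∧
        (x ∈ Wset A ↔ Module.finrank ℝ S = 1)) := by
  classical
  -- injectivity of mulVec
  have hinj : Function.Injective (A.mulVec) := by
    have h1 := LinearMap.finrank_range_add_finrank_ker (A.mulVecLin)
    rw [Module.finrank_pi] at h1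
    have hr : Module.finrank ℂ (LinearMap.range A.mulVecLin) = d := by
      simpa [Matrix.rank] using hA
    rw [hr, Fintype.card_fin] at h1
    have hker : Module.finrank ℂ (LinearMap.ker A.mulVecLin) = 0 := by omega
    have : LinearMap.ker A.mulVecLin = ⊥ := Submodule.finrank_eq_zero.mp hker
    have := LinearMap.ker_eq_bot.mp this
    exact this
  -- the submodule
  let S : Submodule ℝ ({j : Fin m // A.mulVec x j ≠ 0} → ℝ) :=
    { carrier := Vset A x
      add_mem' := by
        rintro a b ⟨ya, hya⟩ ⟨yb, hyb⟩
        refine ⟨ya + yb, fun j => ?_⟩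
        rw [Matrix.mulVec_add, Pi.add_apply, hya j, hyb j]
        split_ifs with h
        · simp only [Pi.add_apply]; push_cast; ring
        · ring
      zero_mem' := ⟨0, fun j => by rw [Matrix.mulVec_zero]; split_ifs <;> simp⟩
      smul_mem' := by
        rintro c a ⟨ya, hya⟩
        refine ⟨(c : ℂ) • ya, fun j => ?_⟩
        rw [Matrix.mulVec_smul, Pi.smul_apply, hya j, smul_eq_mul]
        split_ifs with h
        · simp only [Pi.smul_apply, smul_eq_mul]; push_cast; ring
        · ring }
  set lam0 : {j : Fin m // A.mulVec x j ≠ 0} → ℝ :=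
    fun k => (‖A.mulVec x k.1‖ : ℝ) with hlam0
  have hlam0mem : lam0 ∈ S := by
    refine ⟨x, fun j => ?_⟩
    split_ifs with h
    · rw [csign_mul_abs]
    · push_neg at h; exact h
  -- Ax is nonzero somewhere
  have hAx : A.mulVec x ≠ 0 := fun h => hx (hinj (h.trans (Matrix.mulVec_zero A).symm))
  obtain ⟨j0, hj0⟩ : ∃ j, A.mulVec x j ≠ 0 := by
    by_contra h; push_neg at h; exact hAx (funext h)
  have hlam0ne : lam0 ≠ 0 := by
    intro h
    have := congrFun h ⟨j0, hj0⟩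
    simp only [hlam0, Pi.zero_apply] at this
    exact hj0 (norm_eq_zero.mp this)
  have hv0ne : (⟨lam0, hlam0mem⟩ : S) ≠ 0 := by
    intro h
    exact hlam0ne (congrArg Subtype.val h)
  refine ⟨S, rfl, hlam0mem, ?_⟩
  rw [finrank_eq_one_iff_of_nonzero' (⟨lam0, hlam0mem⟩ : S) hv0ne]
  constructor
  · -- x ∈ Wset → every element of S is a multiple of lam0
    intro hW
    rintro ⟨lam, ylam, hlam⟩
    set t : ℝ := 1 + ∑ k : {j : Fin m // A.mulVec x j ≠ 0}, |lam k| / ‖A.mulVec x k.1‖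
      with ht
    have habs_pos : ∀ k : {j : Fin m // A.mulVec x j ≠ 0}, 0 < ‖A.mulVec x k.1‖ :=
      fun k => norm_pos_iff.mpr k.2
    have hpos : ∀ k : {j : Fin m // A.mulVec x j ≠ 0},
        0 < lam k + t * ‖A.mulVec x k.1‖ := by
      intro k
      have hsum : |lam k| / ‖A.mulVec x k.1‖ ≤
          ∑ k' : {j : Fin m // A.mulVec x j ≠ 0}, |lam k'| / ‖A.mulVec x k'.1‖ := by
        apply Finset.single_le_sum (f := fun k' => |lam k'| / ‖A.mulVec x k'.1‖)
        · intro i _; positivity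
        · exact Finset.mem_univ k
      have h1 : |lam k| ≤ (t - 1) * ‖A.mulVec x k.1‖ := by
        rw [ht]
        have := (div_le_iff₀ (habs_pos k)).mp hsum
        simpa using this
      have : -lam k ≤ (t - 1) * ‖A.mulVec x k.1‖ :=
        le_trans (neg_le_abs _) h1
      nlinarith [habs_pos k]
    set y' : Fin d → ℂ := ylam + (t : ℂ) • x with hy'
    have hAy' : ∀ j, A.mulVec y' j =
        if h : A.mulVec x j ≠ 0 then
          csign (A.mulVec x j) * ((lam ⟨j, h⟩ + t * ‖A.mulVec x j‖ : ℝ) : ℂ)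
        else 0 := by
      intro j
      rw [hy', Matrix.mulVec_add, Matrix.mulVec_smul, Pi.add_apply, Pi.smul_apply, hlam j,
        smul_eq_mul]
      split_ifs with h
      · push_cast
        linear_combination (-(t : ℂ)) * (csign_mul_abs (A.mulVec x j))
      · push_neg at h
        rw [h]
        ring
    have hsign : ∀ j, csign (A.mulVec y' j) = csign (A.mulVec x j) := by
      intro j
      rw [hAy' j]
      split_ifs with h
      · rw [mul_comm, csign_real_mul (hpos ⟨j, h⟩), csign_csign]
      · push_neg at h
        rw [h]
    obtain ⟨s, hs, hxs⟩ := hW y' hsign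
    refine ⟨1 / s - t, ?_⟩
    apply Subtype.ext
    funext k
    simp only [Submodule.coe_smul, Pi.smul_apply, smul_eq_mul]
    have hfun : A.mulVec x = (s : ℂ) • A.mulVec y' := by
      rw [hxs]
      show A.mulVec ((s : ℂ) • y') = _
      rw [Matrix.mulVec_smul]
    have hAx_eq : A.mulVec x k.1 = (s : ℂ) * A.mulVec y' k.1 := by
      rw [congrFun hfun k.1]; rfl
    rw [hAy' k.1, dif_pos k.2] at hAx_eq
    have hcs : csign (A.mulVec x k.1) ≠ 0 := fun hc => k.2 (csign_eq_zero_iff.mp hc)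
    have heq : ((‖A.mulVec x k.1‖ : ℝ) : ℂ) =
        (s : ℂ) * ((lam ⟨k.1, k.2⟩ + t * ‖A.mulVec x k.1‖ : ℝ) : ℂ) := by
      apply mul_left_cancel₀ hcs
      calc csign (A.mulVec x k.1) * ((‖A.mulVec x k.1‖ : ℝ) : ℂ)
          = A.mulVec x k.1 := csign_mul_abs _
        _ = (s : ℂ) * (csign (A.mulVec x k.1) *
              ((lam ⟨k.1, k.2⟩ + t * ‖A.mulVec x k.1‖ : ℝ) : ℂ)) := hAx_eq
        _ = csign (A.mulVec x k.1) * ((s : ℂ) *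
              ((lam ⟨k.1, k.2⟩ + t * ‖A.mulVec x k.1‖ : ℝ) : ℂ)) := by ring
    have heqR : (‖A.mulVec x k.1‖ : ℝ) =
        s * (lam ⟨k.1, k.2⟩ + t * ‖A.mulVec x k.1‖) := by
      exact_mod_cast heq
    have hk : lam ⟨k.1, k.2⟩ = lam k := rfl
    rw [hk] at heqR
    have hs' : s ≠ 0 := hs.ne'
    simp only [hlam0]
    field_simp
    nlinarith [heqR]
  · -- dim 1 → x ∈ Wset
    intro hdim
    intro y hsigny
    have hmemy : (fun k : {j : Fin m // A.mulVec x j ≠ 0} =>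
        (‖A.mulVec y k.1‖ : ℝ)) ∈ S := by
      refine ⟨y, fun j => ?_⟩
      split_ifs with h
      · rw [← hsigny j, csign_mul_abs]
      · push_neg at h
        have : csign (A.mulVec y j) = 0 := by rw [hsigny j, h]; simp [csign]
        exact csign_eq_zero_iff.mp this
    obtain ⟨c, hc⟩ := hdim ⟨_, hmemy⟩
    have hc' : c • lam0 = fun k : {j : Fin m // A.mulVec x j ≠ 0} =>
        (‖A.mulVec y k.1‖ : ℝ) := congrArg Subtype.val hc
    have hyj0 : A.mulVec y j0 ≠ 0 := by
      intro h
      have : csign (A.mulVec x j0) = 0 := by rw [← hsigny j0, h]; simp [csign]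
      exact hj0 (csign_eq_zero_iff.mp this)
    have hcpos : 0 < c := by
      have := congrFun hc' ⟨j0, hj0⟩
      simp only [Pi.smul_apply, smul_eq_mul, hlam0] at this
      have h1 : 0 < ‖A.mulVec y j0‖ := norm_pos_iff.mpr hyj0
      have h2 : 0 < ‖A.mulVec x j0‖ := norm_pos_iff.mpr hj0
      nlinarith
    have hAy : A.mulVec y = A.mulVec ((c : ℂ) • x) := by
      funext j
      rw [Matrix.mulVec_smul, Pi.smul_apply, smul_eq_mul]
      by_cases h : A.mulVec x j ≠ 0
      · have hl := congrFun hc' ⟨j, h⟩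
        simp only [Pi.smul_apply, smul_eq_mul, hlam0] at hl
        calc A.mulVec y j
            = csign (A.mulVec y j) * (‖A.mulVec y j‖ : ℂ) := (csign_mul_abs _).symm
          _ = csign (A.mulVec x j) * ((c * ‖A.mulVec x j‖ : ℝ) : ℂ) := by
              rw [hsigny j, ← hl]
          _ = (c : ℂ) * (csign (A.mulVec x j) * (‖A.mulVec x j‖ : ℂ)) := by
              push_cast; ring
          _ = (c : ℂ) * A.mulVec x j := by rw [csign_mul_abs]
      · push_neg at h
        have : csign (A.mulVec y j) = 0 := by rw [hsigny j, h]; simp [csign]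
        rw [csign_eq_zero_iff.mp this, h]
        ring
    have hyeq : y = (c : ℂ) • x := hinj hAy
    refine ⟨1 / c, by positivity, ?_⟩
    funext k
    rw [hyeq]
    simp only [Pi.smul_apply, smul_eq_mul]
    push_cast
    have : (c : ℂ) ≠ 0 := by exact_mod_cast hcpos.ne'
    field_simp
end

section
/- Let d ≥ 2, let A ∈ ℂ^{m×(2d-1)} have all rows of Fourier type γ_jᵀ = (e^{i(d-1)ω_j},…,1,…,e^{-i(d-1)ω_j}), and let x ∈ ℂ^{2d-1} be conjugate symmetric (x_{-k} = conj(x_k)) with Ax having no zero entry. Then x ∉ W_A: there exists a conjugate symmetric y, not a positive multiple of x, with sign(Ay) = sign(Ax). -/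
/-- Conjugate symmetry of a vector in `ℂ^{2d-1}` indexed by `Fin (2d-1)`
(the index `k` corresponds to the integer `k - (d-1)`):
whenever `k + k' = 2d - 2`, the `k'`-th entry is the conjugate of the `k`-th. -/
def ConjSymm {d : ℕ} (x : Fin (2 * d - 1) → ℂ) : Prop :=
  ∀ k k' : Fin (2 * d - 1), k.val + k'.val = 2 * d - 2 → x k' = starRingEnd ℂ (x k)

lemma csign_pos {a : ℝ} (h : 0 < a) : csign (a : ℂ) = 1 := by
  have ha : (a:ℂ) ≠ 0 := by exact_mod_cast h.ne'
  simp only [csign, if_neg ha, Complex.norm_real, Real.norm_eq_abs, abs_of_pos h]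
  exact div_self ha

lemma csign_neg' {a : ℝ} (h : a < 0) : csign (a : ℂ) = -1 := by
  have ha : (a:ℂ) ≠ 0 := by exact_mod_cast h.ne
  simp only [csign, if_neg ha, Complex.norm_real, Real.norm_eq_abs, abs_of_neg h]
  rw [Complex.ofReal_neg, div_neg, div_self ha]

lemma csign_real_eq {a b : ℝ} (h : 0 < a * b) : csign (a : ℂ) = csign (b : ℂ) := by
  rcases mul_pos_iff.mp h with ⟨ha, hb⟩ | ⟨ha, hb⟩
  · rw [csign_pos ha, csign_pos hb]
  · rw [csign_neg' ha, csign_neg' hb]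

lemma mulVec_real (d m : ℕ) (hd : 2 ≤ d)
    (A : Matrix (Fin m) (Fin (2 * d - 1)) ℂ) (ω : Fin m → ℝ)
    (hA : ∀ (j : Fin m) (k : Fin (2 * d - 1)),
      A j k = Complex.exp (-Complex.I * (((k.val : ℤ) - ((d : ℤ) - 1) : ℤ) : ℂ) * (ω j : ℂ)))
    (u : Fin (2 * d - 1) → ℂ) (hu : ConjSymm u) (j : Fin m) :
    ((A.mulVec u j).re : ℂ) = A.mulVec u j := by
  rw [Complex.conj_eq_iff_re.mp]
  set rev : Fin (2*d-1) → Fin (2*d-1) := fun k => ⟨2*d-2 - k.val, by omega⟩ with hrev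
  have hinv : Function.Involutive rev := by
    intro k
    have := k.isLt
    simp only [hrev]
    ext
    simp only []
    omega
  have hterm : ∀ k, (starRingEnd ℂ) (A j k * u k) = A j (rev k) * u (rev k) := by
    intro k
    have hk := k.isLt
    rw [map_mul]
    congr 1
    · rw [hA, hA, ← Complex.exp_conj]
      congr 1
      have hval : (((rev k).val : ℤ) - ((d:ℤ) - 1)) = -(((k.val : ℤ) - ((d:ℤ)-1))) := by
        simp only [hrev]
        omega
      rw [hval]
      simp only [map_mul, map_neg, Complex.conj_I, map_sub, map_intCast, map_one,
        Complex.conj_ofReal, map_natCast]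
      push_cast
      ring
    · rw [← hu k (rev k) (by simp only [hrev]; omega)]
  calc (starRingEnd ℂ) (A.mulVec u j)
      = ∑ k, (starRingEnd ℂ) (A j k * u k) := by
        simp [Matrix.mulVec, dotProduct, map_sum]
    _ = ∑ k, A j (rev k) * u (rev k) := by simp only [hterm]
    _ = ∑ k, A j k * u k := Equiv.sum_comp (hinv.toPerm rev) (fun k => A j k * u k)
    _ = A.mulVec u j := rfl

theorem aux12 (d m : ℕ) (hd : 2 ≤ d)
    (A : Matrix (Fin m) (Fin (2 * d - 1)) ℂ) (ω : Fin m → ℝ)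
    (hA : ∀ (j : Fin m) (k : Fin (2 * d - 1)),
      A j k = Complex.exp (-Complex.I * (((k.val : ℤ) - ((d : ℤ) - 1) : ℤ) : ℂ) * (ω j : ℂ)))
    (x : Fin (2 * d - 1) → ℂ) (hx : ConjSymm x)
    (hnz : ∀ j, A.mulVec x j ≠ 0)
    (v : Fin (2 * d - 1) → ℂ) (hv : ConjSymm v)
    (hvb : ∀ j, ‖A.mulVec v j‖ ≤ 2)
    (hvx : ∀ s : ℝ, v ≠ fun k => (s : ℂ) * x k) :
    x ∉ Wset A ∧
      ∃ y : Fin (2 * d - 1) → ℂ, ConjSymm y ∧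
        (¬ ∃ t : ℝ, 0 < t ∧ y = fun k => (t : ℂ) * x k) ∧
        (∀ j, csign (A.mulVec y j) = csign (A.mulVec x j)) := by
  have key := mulVec_real d m hd A ω hA
  have hre0 : ∀ j, (A.mulVec x j).re ≠ 0 := by
    intro j h
    exact hnz j (by rw [← key x hx j, h, Complex.ofReal_zero])
  obtain ⟨ε, hε, hεlt⟩ : ∃ ε : ℝ, 0 < ε ∧ ∀ j, 2 * ε < |(A.mulVec x j).re| := by
    rcases isEmpty_or_nonempty (Fin m) with h | h
    · exact ⟨1, one_pos, fun j => (h.false j).elim⟩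
    · set δ := Finset.univ.inf' Finset.univ_nonempty (fun j => |(A.mulVec x j).re|) with hδ
      have hδpos : 0 < δ := by
        rw [hδ, Finset.lt_inf'_iff]
        exact fun j _ => abs_pos.mpr (hre0 j)
      refine ⟨δ/4, by linarith, fun j => ?_⟩
      have := Finset.inf'_le (fun j => |(A.mulVec x j).re|) (Finset.mem_univ j)
      rw [← hδ] at this
      linarith
  set y : Fin (2*d-1) → ℂ := fun k => x k + (ε:ℂ) * v k with hy
  have hcsy : ConjSymm y := by
    intro k k' hkk
    simp only [hy, hx k k' hkk, hv k k' hkk, map_add, map_mul, Complex.conj_ofReal]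
  have hE : (ε:ℂ) ≠ 0 := by exact_mod_cast hε.ne'
  have hsigns : ∀ j, csign (A.mulVec y j) = csign (A.mulVec x j) := by
    intro j
    have hlin : A.mulVec y j = A.mulVec x j + (ε:ℂ) * A.mulVec v j := by
      simp only [Matrix.mulVec, dotProduct, hy]
      rw [Finset.mul_sum, ← Finset.sum_add_distrib]
      congr 1; ext k; ring
    set a := (A.mulVec x j).re with hadef
    set b := (A.mulVec v j).re with hbdef
    have hax : A.mulVec x j = (a:ℂ) := (key x hx j).symm
    have hbv : A.mulVec v j = (b:ℂ) := (key v hv j).symm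
    have ha0 : a ≠ 0 := hre0 j
    have hb2 : |b| ≤ 2 := by
      calc |b| ≤ ‖A.mulVec v j‖ := by
            rw [hbv]; simp
        _ ≤ 2 := hvb j
    have hay : A.mulVec y j = ((a + ε * b : ℝ) : ℂ) := by
      rw [hlin, hax, hbv]; push_cast; ring
    have hεb : |ε * b| < |a| := by
      rw [abs_mul, abs_of_pos hε]
      have h2 := hεlt j
      nlinarith
    rcases abs_lt.mp hεb with ⟨h1, h2⟩
    rw [hay, hax]
    apply csign_real_eq
    rcases ha0.lt_or_gt with h | h
    · rw [abs_of_neg h] at h1 h2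
      have : a + ε * b < 0 := by linarith
      nlinarith
    · rw [abs_of_pos h] at h1 h2
      have : 0 < a + ε * b := by linarith
      nlinarith
  constructor
  · intro hW
    obtain ⟨t, ht, hxy⟩ := hW y hsigns
    have hT : (t:ℂ) ≠ 0 := by exact_mod_cast ht.ne'
    apply hvx ((1 - t) / (t * ε))
    funext k
    have h := congrFun hxy k
    simp only [hy] at h
    push_cast
    field_simp
    linear_combination -h
  · refine ⟨y, hcsy, ?_, hsigns⟩
    rintro ⟨t, ht, hyx⟩
    apply hvx ((t - 1) / ε)
    funext k
    have h := congrFun hyx k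
    simp only [hy] at h
    push_cast
    field_simp
    linear_combination h

theorem stmt_12 (d m : ℕ) (hd : 2 ≤ d)
    (A : Matrix (Fin m) (Fin (2 * d - 1)) ℂ) (ω : Fin m → ℝ)
    (hA : ∀ (j : Fin m) (k : Fin (2 * d - 1)),
      A j k = Complex.exp (-Complex.I * (((k.val : ℤ) - ((d : ℤ) - 1) : ℤ) : ℂ) * (ω j : ℂ)))
    (x : Fin (2 * d - 1) → ℂ) (hx : ConjSymm x)
    (hnz : ∀ j, A.mulVec x j ≠ 0) :
    x ∉ Wset A ∧
      ∃ y : Fin (2 * d - 1) → ℂ, ConjSymm y ∧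
        (¬ ∃ t : ℝ, 0 < t ∧ y = fun k => (t : ℂ) * x k) ∧
        (∀ j, csign (A.mulVec y j) = csign (A.mulVec x j)) := by
  have habs1 : ∀ j k, ‖A j k‖ = 1 := by
    intro j k
    rw [hA, Complex.norm_exp]
    norm_num [Complex.mul_re]
  set c0 : Fin (2*d-1) := ⟨d-1, by omega⟩ with hc0
  set i0 : Fin (2*d-1) := ⟨0, by omega⟩ with hi0
  set iN : Fin (2*d-1) := ⟨2*d-2, by omega⟩ with hiN
  by_cases h0 : x i0 = 0
  · -- use v = e_{i0} + e_{iN}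
    refine aux12 d m hd A ω hA x hx hnz
      (fun k => (if k = i0 then 1 else 0) + (if k = iN then 1 else 0)) ?_ ?_ ?_
    · intro k k' hkk
      have hk := k.isLt
      have hk' := k'.isLt
      have e1 : (k' = i0) ↔ (k = iN) := by
        rw [Fin.ext_iff, Fin.ext_iff]; simp only [hi0, hiN]; omega
      have e2 : (k' = iN) ↔ (k = i0) := by
        rw [Fin.ext_iff, Fin.ext_iff]; simp only [hi0, hiN]; omega
      simp only [e1, e2, map_add, apply_ite (starRingEnd ℂ), map_one, map_zero]
      ring
    · intro j
      have hmv : A.mulVec (fun k => (if k = i0 then (1:ℂ) else 0) + (if k = iN then 1 else 0)) j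
          = A j i0 + A j iN := by
        simp only [Matrix.mulVec, dotProduct, mul_add,
          Finset.sum_add_distrib, mul_ite, mul_one, mul_zero,
          Finset.sum_ite_eq', Finset.mem_univ, if_true]
      rw [hmv]
      calc ‖A j i0 + A j iN‖ ≤ ‖A j i0‖ + ‖A j iN‖ :=
            norm_add_le _ _
        _ ≤ 2 := by rw [habs1, habs1]; norm_num
    · intro s hs
      have hne : i0 ≠ iN := by simp only [hi0, hiN, ne_eq, Fin.mk.injEq]; omega
      have h1 : ((if i0 = i0 then (1:ℂ) else 0) + if i0 = iN then 1 else 0) = s * x i0 :=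
        congrFun hs i0
      rw [if_pos rfl, if_neg hne, h0, mul_zero] at h1
      norm_num at h1
  · -- use v = e_{c0}
    refine aux12 d m hd A ω hA x hx hnz (fun k => if k = c0 then 1 else 0) ?_ ?_ ?_
    · intro k k' hkk
      have hk := k.isLt
      have hk' := k'.isLt
      have e1 : (k' = c0) ↔ (k = c0) := by
        rw [Fin.ext_iff, Fin.ext_iff]; simp only [hc0]; omega
      simp only [e1, apply_ite (starRingEnd ℂ), map_one, map_zero]
    · intro j
      have hmv : A.mulVec (fun k => if k = c0 then (1:ℂ) else 0) j = A j c0 := by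
        simp only [Matrix.mulVec, dotProduct, mul_ite, mul_one, mul_zero,
          Finset.sum_ite_eq', Finset.mem_univ, if_true]
      rw [hmv, habs1]; norm_num
    · intro s hs
      have h1 := congrFun hs i0
      have h2 := congrFun hs c0
      have hne : i0 ≠ c0 := by simp only [hi0, hc0, ne_eq, Fin.mk.injEq]; omega
      simp only [if_neg hne, if_pos rfl] at h1 h2
      have hs0 : (s:ℂ) = 0 := by
        rcases mul_eq_zero.mp h1.symm with h | h
        · exact h
        · exact absurd h h0
      rw [hs0, zero_mul] at h2
      norm_num at h2
end
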